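/- The floating function operation commutes with affine maps: for any nonsingular affine map A and any convex ψ with f = e^{−ψ} ∈ LC and δ ≥ 0, one has A(ψ_δ) = (Aψ)_δ and A(f_δ) = (Af)_δ, where (Aψ)(x) = ψ(Ax). -/

import Mathlib

open MeasureTheory Filter
noncomputable section

/-- `ℝⁿ` as a Euclidean space. -/
abbrev Euc (n : ℕ) := EuclideanSpace ℝ (Fin n)

/-- `f` is a non-degenerate, upper semicontinuous, integrable log-concave
function on `ℝⁿ` (the class `LC`): `f ≥ 0`, `f` is upper semicontinuous,
log-concave, integrable with `0 < ∫ f`, and the interior of its support is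
non-empty. -/
def IsLC {n : ℕ} (f : Euc n → ℝ) : Prop :=
  (∀ x, 0 ≤ f x) ∧ UpperSemicontinuous f ∧
  (∀ x y : Euc n, ∀ a b : ℝ, 0 ≤ a → 0 ≤ b → a + b = 1 →
      f x ^ a * f y ^ b ≤ f (a • x + b • y)) ∧
  Integrable f ∧ 0 < ∫ x, f x ∧ (interior (Function.support f)).Nonempty

/-- Convexity for an `EReal`-valued function (`ψ : ℝⁿ → ℝ ∪ {∞}`). -/
def ConvexEReal {n : ℕ} (ψ : Euc n → EReal) : Prop :=
  ∀ x y : Euc n, ∀ a b : ℝ, 0 ≤ a → 0 ≤ b → a + b = 1 →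
    ψ (a • x + b • y) ≤ (a : EReal) * ψ x + (b : EReal) * ψ y

/-- `e^{−t}` for `t ∈ ℝ ∪ {±∞}`, with `e^{−∞} = 0`. -/
def expNeg (t : EReal) : ℝ := if t = ⊤ then 0 else Real.exp (-(t.toReal))

/-- The epigraph of `ψ : ℝⁿ → ℝ ∪ {∞}` as a subset of `ℝⁿ × ℝ`. -/
def epiE {n : ℕ} (ψ : Euc n → EReal) : Set (Euc n × ℝ) :=
  {p | ψ p.1 ≤ (p.2 : EReal)}

/-- The floating set of the epigraph of `ψ` at parameter `δ`:
`(epi ψ)_δ = ⋂ {H⁺ : vol_{n+1}(H⁻ ∩ epi ψ) ≤ δ ∫ e^{−ψ}}`, the intersection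
over all half-spaces `H⁺ = {p : φ p ≥ β}` of `ℝⁿ × ℝ`. -/
def floatEpi {n : ℕ} (ψ : Euc n → EReal) (δ : ℝ) : Set (Euc n × ℝ) :=
  ⋂ (φ : (Euc n × ℝ) →ₗ[ℝ] ℝ) (β : ℝ)
    (_ : volume (epiE ψ ∩ {p | φ p ≤ β})
        ≤ ENNReal.ofReal (δ * ∫ x, expNeg (ψ x))),
    {p | β ≤ φ p}

/-- The floating function `ψ_δ`, defined by `epi(ψ_δ) = (epi ψ)_δ`; its value
at `x` is the infimum of the heights `s` with `(x,s)` in the floating set. -/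
def floatPsi {n : ℕ} (ψ : Euc n → EReal) (δ : ℝ) (x : Euc n) : EReal :=
  ⨅ (s : ℝ) (_ : (x, s) ∈ floatEpi ψ δ), (s : EReal)

/-! ### Auxiliary lemmas -/

open scoped ENNReal NNReal

/-- Scaling a factor of a product measure scales the product measure. -/
lemma FFAC.smul_prod_meas {α β : Type*} [MeasurableSpace α] [MeasurableSpace β]
    (c : ℝ≥0) (μ : Measure α) (ν : Measure β) [SigmaFinite μ] [SigmaFinite ν] :
    ((c : ℝ≥0∞) • μ).prod ν = (c : ℝ≥0∞) • (μ.prod ν) := by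
  rw [← ENNReal.smul_def, ← ENNReal.smul_def]
  refine Measure.prod_eq fun s t hs ht => ?_
  rw [Measure.smul_apply, Measure.smul_apply, Measure.prod_prod, ENNReal.smul_def,
    ENNReal.smul_def, smul_eq_mul, smul_eq_mul, mul_assoc]

/-- An affine equivalence of `ℝⁿ` is measurable. -/
lemma FFAC.meas_A {n : ℕ} (A : Euc n ≃ᵃ[ℝ] Euc n) : Measurable ⇑A := by
  have : ⇑A = fun x => A.linear x + A 0 := by
    funext x; simpa using (A : Euc n →ᵃ[ℝ] Euc n).map_vadd 0 x
  rw [this]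
  exact (A.linear.toLinearMap.continuous_of_finiteDimensional.add continuous_const).measurable

/-- An affine equivalence of `ℝⁿ` as a measurable equivalence. -/
def FFAC.measEquivA {n : ℕ} (A : Euc n ≃ᵃ[ℝ] Euc n) : Euc n ≃ᵐ Euc n :=
  ⟨A.toEquiv, FFAC.meas_A A, FFAC.meas_A A.symm⟩

/-- The pushforward of Lebesgue measure by an affine equivalence. -/
lemma FFAC.map_affine_volume {n : ℕ} (A : Euc n ≃ᵃ[ℝ] Euc n) :
    Measure.map ⇑A volume
      = ENNReal.ofReal |(LinearMap.det (A.linear : Euc n →ₗ[ℝ] Euc n))⁻¹| • volume := by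
  have hd : LinearMap.det (A.linear : Euc n →ₗ[ℝ] Euc n) ≠ 0 :=
    (LinearEquiv.isUnit_det' A.linear).ne_zero
  have hfun : ⇑A = (fun x => x + A 0) ∘ ⇑(A.linear : Euc n →ₗ[ℝ] Euc n) := by
    funext x; simpa using (A : Euc n →ᵃ[ℝ] Euc n).map_vadd 0 x
  rw [hfun, ← Measure.map_map (measurable_add_const (A 0))
      (A.linear.toLinearMap.continuous_of_finiteDimensional.measurable),
    Measure.map_linearMap_addHaar_eq_smul_addHaar volume hd, Measure.map_smul,
    map_add_right_eq_self]

/-- Change of variables for an affine equivalence of `ℝⁿ`. -/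
lemma FFAC.integral_comp_affine {n : ℕ} (A : Euc n ≃ᵃ[ℝ] Euc n) (f : Euc n → ℝ) :
    ∫ x, f (A x) = |(LinearMap.det (A.linear : Euc n →ₗ[ℝ] Euc n))⁻¹| * ∫ x, f x := by
  have h1 : ∫ x, f (A x) = ∫ y, f y ∂(Measure.map (FFAC.measEquivA A) volume) :=
    (MeasureTheory.integral_map_equiv (FFAC.measEquivA A) f).symm
  have h2 : Measure.map (⇑(FFAC.measEquivA A)) volume = Measure.map ⇑A volume := rfl
  rw [h1, h2, FFAC.map_affine_volume, integral_smul_measure,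
    ENNReal.toReal_ofReal (abs_nonneg _), smul_eq_mul]

/-- The measure of the preimage of a set of `ℝⁿ × ℝ` under `(x, s) ↦ (A x, s)`. -/
lemma FFAC.volume_preimage_prodmap {n : ℕ} (A : Euc n ≃ᵃ[ℝ] Euc n) (T : Set (Euc n × ℝ)) :
    volume ((fun p : Euc n × ℝ => (A p.1, p.2)) ⁻¹' T)
      = ENNReal.ofReal |(LinearMap.det (A.linear : Euc n →ₗ[ℝ] Euc n))⁻¹| * volume T := by
  set c : ℝ≥0 := Real.toNNReal |(LinearMap.det (A.linear : Euc n →ₗ[ℝ] Euc n))⁻¹|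
  have hc : ENNReal.ofReal |(LinearMap.det (A.linear : Euc n →ₗ[ℝ] Euc n))⁻¹| = (c : ℝ≥0∞) := rfl
  let e : (Euc n × ℝ) ≃ᵐ (Euc n × ℝ) := (FFAC.measEquivA A).prodCongr (MeasurableEquiv.refl ℝ)
  have he : (fun p : Euc n × ℝ => (A p.1, p.2)) = ⇑e := rfl
  have hmap : Measure.map ⇑e (volume : Measure (Euc n × ℝ)) = (c : ℝ≥0∞) • volume := by
    have h0 : ⇑e = Prod.map ⇑A (id : ℝ → ℝ) := rfl
    rw [h0, Measure.volume_eq_prod (Euc n) ℝ,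
      ← Measure.map_prod_map _ _ (FFAC.meas_A A) measurable_id, Measure.map_id,
      FFAC.map_affine_volume, hc, FFAC.smul_prod_meas]
  calc volume ((fun p : Euc n × ℝ => (A p.1, p.2)) ⁻¹' T) = volume (⇑e ⁻¹' T) := by rw [he]
    _ = Measure.map ⇑e volume T := (MeasurableEquiv.map_apply e T).symm
    _ = (c : ℝ≥0∞) * volume T := by rw [hmap]; rfl
    _ = _ := by rw [hc]

lemma FFAC.expNeg_nonneg (t : EReal) : 0 ≤ expNeg t := by
  unfold expNeg
  split
  · exact le_refl 0
  · exact (Real.exp_pos _).le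

/-- The floating set of `ψ ∘ A` is the preimage under `(x, s) ↦ (A x, s)` of the
floating set of `ψ`. -/
lemma FFAC.floatEpi_comp {n : ℕ} (ψ : Euc n → EReal) (δ : ℝ)
    (A : Euc n ≃ᵃ[ℝ] Euc n) :
    floatEpi (fun y => ψ (A y)) δ = (fun p : Euc n × ℝ => (A p.1, p.2)) ⁻¹' floatEpi ψ δ := by
  set d : ℝ := LinearMap.det (A.linear : Euc n →ₗ[ℝ] Euc n) with hd_def
  have hd : d ≠ 0 := (LinearEquiv.isUnit_det' A.linear).ne_zero
  set c : ℝ≥0∞ := ENNReal.ofReal |d⁻¹| with hc_def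
  have hc0 : c ≠ 0 := by
    simp [hc_def, ENNReal.ofReal_eq_zero, not_le, abs_pos, inv_ne_zero hd]
    exact hd
  have hctop : c ≠ ⊤ := ENNReal.ofReal_ne_top
  set B : Euc n × ℝ → Euc n × ℝ := fun p => (A p.1, p.2) with hB_def
  set I : ℝ := ∫ x, expNeg (ψ x) with hI_def
  set K : ℝ≥0∞ := ENNReal.ofReal (δ * I) with hK_def
  have hK' : ENNReal.ofReal (δ * ∫ x, expNeg (ψ (A x))) = c * K := by
    rw [FFAC.integral_comp_affine A (fun x => expNeg (ψ x))]
    rw [show δ * (|d⁻¹| * I) = |d⁻¹| * (δ * I) by ring,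
      ENNReal.ofReal_mul (abs_nonneg _)]
  have hepi : epiE (fun y => ψ (A y)) = B ⁻¹' epiE ψ := rfl
  have hAx : ∀ x : Euc n, A x = A.linear x + A 0 := fun x => by
    simpa using (A : Euc n →ᵃ[ℝ] Euc n).map_vadd 0 x
  have hAsx : ∀ x : Euc n, A.symm x = A.symm.linear x + A.symm 0 := fun x => by
    simpa using (A.symm : Euc n →ᵃ[ℝ] Euc n).map_vadd 0 x
  ext p
  simp only [floatEpi, Set.mem_iInter, Set.mem_preimage, Set.mem_setOf_eq]
  constructor
  · intro h φ β hcond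
    set ℓ : (Euc n × ℝ) →ₗ[ℝ] (Euc n × ℝ) :=
      (A.linear : Euc n →ₗ[ℝ] Euc n).prodMap (LinearMap.id) with hl_def
    set t : ℝ := φ (A 0, 0) with ht_def
    have hkey : ∀ q : Euc n × ℝ, φ (B q) = (φ.comp ℓ) q + t := by
      intro q
      have hlq : ℓ q = ((A.linear q.1 : Euc n), q.2) := by
        simp [hl_def]
      have hsum : ℓ q + ((A 0 : Euc n), (0:ℝ)) = B q := by
        simp only [hB_def]
        rw [hlq, Prod.mk_add_mk, add_zero, ← hAx q.1]
      have h2 := congrArg φ hsum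
      rw [map_add] at h2
      simp only [LinearMap.comp_apply]
      rw [← h2, ht_def]
    have hhalf : {q : Euc n × ℝ | (φ.comp ℓ) q ≤ β - t} = B ⁻¹' {q | φ q ≤ β} := by
      ext q
      have := hkey q
      simp only [Set.mem_setOf_eq, Set.mem_preimage]
      constructor <;> intro h' <;> linarith
    have hcond' : volume (epiE (fun y => ψ (A y)) ∩ {q | (φ.comp ℓ) q ≤ β - t})
        ≤ ENNReal.ofReal (δ * ∫ x, expNeg (ψ (A x))) := by
      rw [hepi, hhalf, ← Set.preimage_inter, hK',
        show B ⁻¹' (epiE ψ ∩ {q | φ q ≤ β})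
          = (fun p : Euc n × ℝ => (A p.1, p.2)) ⁻¹' (epiE ψ ∩ {q | φ q ≤ β}) from rfl,
        FFAC.volume_preimage_prodmap A, ← hd_def, ← hc_def]
      exact mul_le_mul_right hcond c
    have hres := h (φ.comp ℓ) (β - t) hcond'
    have h2 := hkey p
    linarith
  · intro h φ' β' hcond
    set ℓ' : (Euc n × ℝ) →ₗ[ℝ] (Euc n × ℝ) :=
      (A.symm.linear : Euc n →ₗ[ℝ] Euc n).prodMap (LinearMap.id) with hl_def
    set t0 : ℝ := φ' (A.symm 0, 0) with ht_def
    set φ : (Euc n × ℝ) →ₗ[ℝ] ℝ := φ'.comp ℓ' with hphi_def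
    have hkey : ∀ q : Euc n × ℝ, φ (B q) = φ' q - t0 := by
      intro q
      have h1 : (A.symm.linear : Euc n →ₗ[ℝ] Euc n) (A q.1) = q.1 - A.symm 0 := by
        rw [eq_sub_iff_add_eq]
        have := hAsx (A q.1)
        rw [A.symm_apply_apply] at this
        exact this.symm
      have hlq : ℓ' (B q) = ((q.1 - A.symm 0 : Euc n), q.2) := by
        simp only [hB_def, hl_def, LinearMap.prodMap_apply, LinearMap.id_apply]
        rw [h1]
      have hq : ((q.1 - A.symm 0 : Euc n), q.2) + ((A.symm 0 : Euc n), (0:ℝ)) = q := by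
        rw [Prod.mk_add_mk, add_zero, sub_add_cancel]
      have hadd := congrArg φ' hq
      rw [map_add] at hadd
      have hphiB : φ (B q) = φ' ((q.1 - A.symm 0 : Euc n), q.2) := by
        rw [hphi_def, LinearMap.comp_apply, hlq]
      rw [hphiB, ht_def]
      linarith
    have hhalf : {q : Euc n × ℝ | φ' q ≤ β'} = B ⁻¹' {q | φ q ≤ β' - t0} := by
      ext q
      have := hkey q
      simp only [Set.mem_setOf_eq, Set.mem_preimage]
      constructor <;> intro h' <;> linarith
    have hcond2 : volume (epiE ψ ∩ {q | φ q ≤ β' - t0}) ≤ K := by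
      rw [hK', hepi, hhalf, ← Set.preimage_inter,
        show B ⁻¹' (epiE ψ ∩ {q | φ q ≤ β' - t0})
          = (fun p : Euc n × ℝ => (A p.1, p.2)) ⁻¹' (epiE ψ ∩ {q | φ q ≤ β' - t0}) from rfl,
        FFAC.volume_preimage_prodmap A, ← hd_def, ← hc_def] at hcond
      exact (ENNReal.mul_le_mul_iff_right hc0 hctop).mp hcond
    have hres := h φ (β' - t0) hcond2
    have h2 := hkey p
    linarith

lemma FFAC.floatPsi_comp {n : ℕ} (ψ : Euc n → EReal) (δ : ℝ)
    (A : Euc n ≃ᵃ[ℝ] Euc n) (x : Euc n) :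
    floatPsi ψ δ (A x) = floatPsi (fun y => ψ (A y)) δ x := by
  unfold floatPsi
  apply (iInf_congr _).symm
  intro s
  rw [FFAC.floatEpi_comp ψ δ A]
  rfl

/-- the floating function commutes with nonsingular affine
maps: `A(ψ_δ) = (Aψ)_δ` and `A(f_δ) = (Af)_δ`, where `(Aψ)(x) = ψ(Ax)`. -/
theorem floating_function_affine_covariant (n : ℕ) (ψ : Euc n → EReal)
    (hconv : ConvexEReal ψ) (hbot : ∀ x, ψ x ≠ ⊥) (δ : ℝ) (hδ : 0 ≤ δ)
    (hLC : IsLC (fun x => expNeg (ψ x))) (A : Euc n ≃ᵃ[ℝ] Euc n) :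
    (∀ x, floatPsi ψ δ (A x) = floatPsi (fun y => ψ (A y)) δ x) ∧
      (∀ x, expNeg (floatPsi ψ δ (A x))
        = expNeg (floatPsi (fun y => ψ (A y)) δ x)) := by
  refine ⟨fun x => FFAC.floatPsi_comp ψ δ A x, fun x => ?_⟩
  rw [FFAC.floatPsi_comp ψ δ A x]
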